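/- For every μ ≥ 0, the advantage of the Gaussian trade-off curve equals the total variation of the μ-GDP Gaussian pair: sup_{α ∈ [0,1]} (1 − α − f_μ(α)) = Φ(μ/2) − Φ(−μ/2) = 2Φ(μ/2) − 1. -/
import Mathlib


/-- The standard normal CDF `Φ`. -/
noncomputable def stdGaussianCDF (x : ℝ) : ℝ :=
  ∫ t in Set.Iic x, Real.exp (-(t ^ 2) / 2) / Real.sqrt (2 * Real.pi)

section Aux
open MeasureTheory Real Set

noncomputable def gpdf (t : ℝ) : ℝ := Real.exp (-(t ^ 2) / 2) / Real.sqrt (2 * Real.pi)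

lemma gpdf_pos (t : ℝ) : 0 < gpdf t :=
  div_pos (Real.exp_pos _) (Real.sqrt_pos.2 (by positivity))

lemma gpdf_integrable : Integrable gpdf := by
  have h : Integrable (fun t : ℝ => Real.exp (-(1/2 : ℝ) * t ^ 2)) :=
    integrable_exp_neg_mul_sq (by norm_num)
  have h2 := h.div_const (Real.sqrt (2 * Real.pi))
  have : gpdf = fun t => Real.exp (-(1/2 : ℝ) * t ^ 2) / Real.sqrt (2 * Real.pi) := by
    funext t; unfold gpdf; ring_nf
  rw [this]; exact h2

lemma integral_gpdf : ∫ t, gpdf t = 1 := by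
  have h : ∫ t : ℝ, Real.exp (-(1/2 : ℝ) * t ^ 2) = Real.sqrt (Real.pi / (1/2)) :=
    integral_gaussian (1/2)
  have h2 : ∫ t, gpdf t = (∫ t : ℝ, Real.exp (-(1/2 : ℝ) * t ^ 2)) / Real.sqrt (2 * Real.pi) := by
    rw [← integral_div]; congr 1 with t; unfold gpdf; ring_nf
  rw [h2, h]
  rw [show Real.pi / (1/2) = 2 * Real.pi by ring]
  exact div_self (by positivity)

lemma cdf_eq (x : ℝ) : stdGaussianCDF x = ∫ t in Set.Iic x, gpdf t := rfl

lemma cdf_sub (a b : ℝ) : stdGaussianCDF b - stdGaussianCDF a = ∫ t in a..b, gpdf t := by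
  rw [cdf_eq, cdf_eq]
  exact intervalIntegral.integral_Iic_sub_Iic gpdf_integrable.integrableOn
    gpdf_integrable.integrableOn

lemma cdf_strictMono : StrictMono stdGaussianCDF := by
  intro a b hab
  have := intervalIntegral.intervalIntegral_pos_of_pos (f := gpdf) gpdf_integrable.intervalIntegrable gpdf_pos hab
  linarith [cdf_sub a b]

lemma cdf_continuous : Continuous stdGaussianCDF := by
  have : Continuous fun b => ∫ t in (0:ℝ)..b, gpdf t :=
    gpdf_integrable.continuous_primitive 0
  have heq : ∀ b, stdGaussianCDF b = stdGaussianCDF 0 + ∫ t in (0:ℝ)..b, gpdf t := by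
    intro b; linarith [cdf_sub 0 b]
  rw [funext heq]
  exact continuous_const.add this

lemma cdf_tendsto_atBot : Filter.Tendsto stdGaussianCDF Filter.atBot (nhds 0) := by
  have h := MeasureTheory.intervalIntegral_tendsto_integral_Iic (f := gpdf) (μ := volume)
    0 gpdf_integrable.integrableOn Filter.tendsto_id
  have heq : ∀ b : ℝ, stdGaussianCDF b = stdGaussianCDF 0 - ∫ t in b..(0:ℝ), gpdf t := by
    intro b; linarith [cdf_sub b 0]
  rw [funext heq]
  have : Filter.Tendsto (fun b : ℝ => stdGaussianCDF 0 - ∫ t in b..(0:ℝ), gpdf t)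
      Filter.atBot (nhds (stdGaussianCDF 0 - stdGaussianCDF 0)) :=
    Filter.Tendsto.sub tendsto_const_nhds (by rw [cdf_eq]; exact h)
  simpa using this

lemma cdf_tendsto_atTop : Filter.Tendsto stdGaussianCDF Filter.atTop (nhds 1) := by
  have h := MeasureTheory.intervalIntegral_tendsto_integral_Ioi (f := gpdf) (μ := volume)
    0 gpdf_integrable.integrableOn Filter.tendsto_id
  have heq : ∀ b : ℝ, stdGaussianCDF b = stdGaussianCDF 0 + ∫ t in (0:ℝ)..b, gpdf t := by
    intro b; linarith [cdf_sub 0 b]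
  rw [funext heq]
  have key : stdGaussianCDF 0 + ∫ t in Set.Ioi (0:ℝ), gpdf t = 1 := by
    rw [cdf_eq, intervalIntegral.integral_Iic_add_Ioi gpdf_integrable.integrableOn
      gpdf_integrable.integrableOn, integral_gpdf]
  rw [← key]
  exact Filter.Tendsto.add tendsto_const_nhds h

lemma cdf_surj {y : ℝ} (h0 : 0 < y) (h1 : y < 1) : ∃ x, stdGaussianCDF x = y := by
  obtain ⟨a, ha⟩ := (cdf_tendsto_atBot.eventually_lt_const h0).exists
  obtain ⟨b, hb⟩ := (cdf_tendsto_atTop.eventually_const_lt h1).exists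
  have hab : a ≤ b := by
    by_contra hc
    exact absurd (cdf_strictMono (lt_of_not_ge hc)) (by linarith)
  obtain ⟨x, _, hx⟩ := intermediate_value_Icc hab cdf_continuous.continuousOn
    ⟨ha.le, hb.le⟩
  exact ⟨x, hx⟩

lemma cdf_symm (x : ℝ) : stdGaussianCDF (-x) = 1 - stdGaussianCDF x := by
  have h1 : stdGaussianCDF (-x) = ∫ t in Set.Iic (-x), gpdf t := rfl
  have h2 : (∫ t in Set.Iic (-x), gpdf t) = ∫ t in Set.Ioi x, gpdf t := by
    rw [show (Set.Ioi x) = Set.Ioi (-(-x)) by rw [neg_neg], ← integral_comp_neg_Iic (-x) gpdf]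
    congr 1 with t
    unfold gpdf; rw [neg_sq]
  have h4 : stdGaussianCDF x + ∫ t in Set.Ioi x, gpdf t = 1 := by
    rw [cdf_eq, intervalIntegral.integral_Iic_add_Ioi gpdf_integrable.integrableOn
      gpdf_integrable.integrableOn, integral_gpdf]
  rw [h1, h2]; linarith

/-- key bound -/
lemma cdf_shift_le (μ x : ℝ) (hμ : 0 ≤ μ) :
    stdGaussianCDF x - stdGaussianCDF (x - μ) ≤
      stdGaussianCDF (μ / 2) - stdGaussianCDF (-(μ / 2)) := by
  have hmono : ∀ s t : ℝ, s ^ 2 ≤ t ^ 2 → gpdf t ≤ gpdf s := by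
    intro s t h
    unfold gpdf
    have hs : (0:ℝ) < Real.sqrt (2 * Real.pi) := Real.sqrt_pos.2 (by positivity)
    have he : Real.exp (-(t^2)/2) ≤ Real.exp (-(s^2)/2) := Real.exp_le_exp.2 (by linarith)
    exact div_le_div_of_nonneg_right he hs.le
  rcases le_total x (μ / 2) with hx | hx
  · -- x ≤ μ/2 : show Φ(-μ/2) - Φ(x-μ) ≤ Φ(μ/2) - Φ(x)
    have key : (∫ t in (x - μ)..(-(μ/2)), gpdf t) ≤ ∫ t in x..(μ/2), gpdf t := by
      rw [show (x - μ) = x - μ by ring, show (-(μ/2)) = μ/2 - μ by ring,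
        ← intervalIntegral.integral_comp_sub_right gpdf μ]
      apply intervalIntegral.integral_mono_on hx
        ((gpdf_integrable.comp_sub_right μ).intervalIntegrable)
        gpdf_integrable.intervalIntegrable
      intro t ht
      apply hmono
      nlinarith [ht.2]
    rw [← cdf_sub, ← cdf_sub] at key
    linarith
  · -- μ/2 ≤ x : show Φ(x) - Φ(μ/2) ≤ Φ(x-μ) - Φ(-μ/2)
    have key : (∫ t in (μ/2)..x, gpdf t) ≤ ∫ t in (-(μ/2))..(x - μ), gpdf t := by
      rw [show (-(μ/2)) = μ/2 - μ by ring, show (x - μ) = x - μ by ring,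
        ← intervalIntegral.integral_comp_sub_right gpdf μ]
      apply intervalIntegral.integral_mono_on hx
        gpdf_integrable.intervalIntegrable
        ((gpdf_integrable.comp_sub_right μ).intervalIntegrable)
      intro t ht
      apply hmono
      nlinarith [ht.1]
    rw [← cdf_sub, ← cdf_sub] at key
    linarith

lemma cdf_nonneg (x : ℝ) : 0 ≤ stdGaussianCDF x :=
  MeasureTheory.setIntegral_nonneg measurableSet_Iic (fun t _ => (gpdf_pos t).le)

lemma cdf_pos (x : ℝ) : 0 < stdGaussianCDF x := by
  have h := intervalIntegral.intervalIntegral_pos_of_pos (f := gpdf) gpdf_integrable.intervalIntegrable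
    gpdf_pos (show x - 1 < x by linarith)
  have := cdf_sub (x - 1) x
  have := cdf_nonneg (x - 1)
  linarith

lemma cdf_lt_one (x : ℝ) : stdGaussianCDF x < 1 := by
  have := cdf_pos (-x); have := cdf_symm x; linarith

end Aux

/-- The standard normal quantile function `Φ⁻¹`. -/
noncomputable def stdGaussianQuantile : ℝ → ℝ :=
  Function.invFun stdGaussianCDF

/-- The Gaussian trade-off curve `f_μ`, with `f_μ(α) = Φ(Φ⁻¹(1-α) - μ)` on `(0,1)`,
`f_μ(0) = 1` and `f_μ(1) = 0`. -/
noncomputable def gdpCurve (μ α : ℝ) : ℝ :=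
  if α ≤ 0 then 1
  else if 1 ≤ α then 0
  else stdGaussianCDF (stdGaussianQuantile (1 - α) - μ)

lemma quantile_cdf (x : ℝ) : stdGaussianQuantile (stdGaussianCDF x) = x :=
  Function.leftInverse_invFun cdf_strictMono.injective x

/-- For every `μ ≥ 0`, the advantage of the Gaussian trade-off curve equals the
total variation of the `μ`-GDP Gaussian pair:
`sup_{α ∈ [0,1]} (1 - α - f_μ(α)) = Φ(μ/2) - Φ(-μ/2) = 2Φ(μ/2) - 1`. -/
theorem adv_gdpCurve_eq (μ : ℝ) (hμ : 0 ≤ μ) :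
    sSup ((fun α => 1 - α - gdpCurve μ α) '' Set.Icc (0:ℝ) 1) =
      stdGaussianCDF (μ / 2) - stdGaussianCDF (-(μ / 2)) ∧
    stdGaussianCDF (μ / 2) - stdGaussianCDF (-(μ / 2)) =
      2 * stdGaussianCDF (μ / 2) - 1 := by
  have hsymm : stdGaussianCDF (-(μ/2)) = 1 - stdGaussianCDF (μ/2) := cdf_symm (μ/2)
  constructor
  · -- sSup
    apply IsGreatest.csSup_eq
    constructor
    · -- membership: α* = 1 - Φ(μ/2)
      refine ⟨1 - stdGaussianCDF (μ/2), ⟨by linarith [cdf_lt_one (μ/2)], by linarith [cdf_pos (μ/2)]⟩, ?_⟩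
      have h0 : ¬ (1 - stdGaussianCDF (μ/2) ≤ 0) := by push_neg; linarith [cdf_lt_one (μ/2)]
      have h1 : ¬ (1 ≤ 1 - stdGaussianCDF (μ/2)) := by push_neg; linarith [cdf_pos (μ/2)]
      simp only [gdpCurve, h0, h1, if_false]
      rw [show (1 : ℝ) - (1 - stdGaussianCDF (μ/2)) = stdGaussianCDF (μ/2) by ring,
        quantile_cdf]
      rw [show μ/2 - μ = -(μ/2) by ring]
    · -- upper bound
      rintro v ⟨α, hα, rfl⟩
      simp only
      by_cases h0 : α ≤ 0
      · simp only [gdpCurve, h0, if_true]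
        have := hα.1
        linarith [cdf_strictMono.monotone (show -(μ/2) ≤ μ/2 by linarith)]
      · by_cases h1 : (1:ℝ) ≤ α
        · simp only [gdpCurve, h0, if_false, h1, if_true]
          linarith [cdf_strictMono.monotone (show -(μ/2) ≤ μ/2 by linarith)]
        · simp only [gdpCurve, h0, if_false, h1]
          push_neg at h0 h1
          obtain ⟨x, hx⟩ := cdf_surj (show (0:ℝ) < 1 - α by linarith) (by linarith)
          rw [← hx, quantile_cdf]
          have := cdf_shift_le μ x hμ
          rw [hx] at this
          linarith
  · linarith
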